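/- arXiv:2603.09019 — 2 statements merged into one kernel-verified Lean document; each statement's English description precedes it below -/
import Mathlib

section
/- (Darroch) Let B = B_1 + ⋯ + B_m be a sum of independent Bernoulli random variables with mean μ_B = E[B]. Then the distribution of B has either a unique mode or two adjacent (consecutive integer) modes, and any mode m_B (an integer maximizing k ↦ P(B = k)) satisfies |m_B − μ_B| < 1. -/
open MeasureTheory ProbabilityTheory Finset
open scoped Classical

set_option linter.unusedSectionVars false

noncomputable section

namespace DarrochAux

/-- pmf of a Poisson binomial distribution with success probabilities `l`, on `ℤ`. -/
noncomputable def pm : List ℝ → ℤ → ℝ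
  | [], k => if k = 0 then 1 else 0
  | p :: l, k => (1 - p) * pm l k + p * pm l (k - 1)

/-- all entries are probabilities -/
def Good (l : List ℝ) : Prop := ∀ p ∈ l, 0 ≤ p ∧ p ≤ 1

lemma Good.cons {p : ℝ} {l : List ℝ} (h : Good (p :: l)) : Good l :=
  fun q hq => h q (List.mem_cons_of_mem _ hq)

lemma Good.head {p : ℝ} {l : List ℝ} (h : Good (p :: l)) : 0 ≤ p ∧ p ≤ 1 :=
  h p List.mem_cons_self

lemma pm_nonneg {l : List ℝ} (hl : Good l) (k : ℤ) : 0 ≤ pm l k := by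
  induction l generalizing k with
  | nil => simp only [pm]; split <;> norm_num
  | cons p t ih =>
    obtain ⟨h0, h1⟩ := hl.head
    have := ih hl.cons k
    have := ih hl.cons (k - 1)
    simp only [pm]
    nlinarith

lemma pm_zero_of_neg {l : List ℝ} {k : ℤ} (hk : k < 0) : pm l k = 0 := by
  induction l generalizing k with
  | nil => simp only [pm]; rw [if_neg (by omega)]
  | cons p t ih =>
    simp only [pm, ih hk, ih (show k - 1 < 0 by omega)]
    ring

lemma pm_zero_of_gt {l : List ℝ} {k : ℤ} (hk : (l.length : ℤ) < k) : pm l k = 0 := by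
  induction l generalizing k with
  | nil =>
    simp only [List.length_nil, Nat.cast_zero] at hk
    simp only [pm]; rw [if_neg (by omega)]
  | cons p t ih =>
    simp only [List.length_cons] at hk
    have h1 : (t.length : ℤ) < k := by push_cast at hk ⊢; omega
    have h2 : (t.length : ℤ) < k - 1 := by push_cast at hk ⊢; omega
    simp only [pm, ih h1, ih h2]
    ring

lemma sum_shift (g : ℤ → ℝ) (a b : ℤ) :
    ∑ k ∈ Icc a b, g (k - 1) = ∑ k ∈ Icc (a - 1) (b - 1), g k := by
  rw [show Icc (a-1) (b-1) = (Icc a b).map (addRightEmbedding (-1)) by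
    rw [Finset.map_add_right_Icc]; ring_nf]
  rw [Finset.sum_map]
  simp [addRightEmbedding, sub_eq_add_neg]

lemma pm_sum {l : List ℝ} : ∀ {a b : ℤ}, a ≤ 0 → (l.length : ℤ) ≤ b →
    ∑ k ∈ Icc a b, pm l k = 1 := by
  induction l with
  | nil =>
    intro a b ha hb
    simp only [List.length_nil, Nat.cast_zero] at hb
    rw [Finset.sum_eq_single 0]
    · simp [pm]
    · intro k _ hk; simp [pm, hk]
    · intro h; simp only [Finset.mem_Icc] at h; omega
  | cons p t ih =>
    intro a b ha hb
    simp only [List.length_cons] at hb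
    have hb' : (t.length : ℤ) ≤ b := by push_cast at hb ⊢; omega
    have hb'' : (t.length : ℤ) ≤ b - 1 := by push_cast at hb ⊢; omega
    simp only [pm]
    rw [Finset.sum_add_distrib, ← Finset.mul_sum, ← Finset.mul_sum,
      sum_shift (fun k => pm t k), ih ha hb', ih (by omega) hb'']
    ring

lemma pm_mean {l : List ℝ} : ∀ {a b : ℤ}, a ≤ 0 → (l.length : ℤ) ≤ b →
    ∑ k ∈ Icc a b, (k : ℝ) * pm l k = l.sum := by
  induction l with
  | nil =>
    intro a b ha hb
    simp only [List.length_nil, Nat.cast_zero] at hb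
    rw [Finset.sum_eq_single 0]
    · simp
    · intro k _ hk; simp [pm, hk]
    · intro h; simp only [Finset.mem_Icc] at h; omega
  | cons p t ih =>
    intro a b ha hb
    simp only [List.length_cons] at hb
    have hb' : (t.length : ℤ) ≤ b := by push_cast at hb ⊢; omega
    have hb'' : (t.length : ℤ) ≤ b - 1 := by push_cast at hb ⊢; omega
    simp only [pm, List.sum_cons]
    have expand : ∀ k : ℤ, (k:ℝ) * ((1 - p) * pm t k + p * pm t (k - 1)) =
        (1-p) * ((k:ℝ) * pm t k) + p * ((((k-1:ℤ)):ℝ) * pm t (k-1)) + p * pm t (k-1) := by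
      intro k; push_cast; ring
    rw [Finset.sum_congr rfl (fun k _ => expand k)]
    rw [Finset.sum_add_distrib, Finset.sum_add_distrib, ← Finset.mul_sum, ← Finset.mul_sum,
      ← Finset.mul_sum, sum_shift (fun k => (k:ℝ) * pm t k), sum_shift (fun k => pm t k),
      ih ha hb', ih (by omega) hb'', pm_sum (by omega) hb'']
    ring

/-- support of `pm l` is an integer interval `[a, b] ⊆ [0, length]`. -/
lemma pm_support {l : List ℝ} (hl : Good l) :
    ∃ a b : ℤ, 0 ≤ a ∧ a ≤ b ∧ b ≤ l.length ∧ ∀ k, (0 < pm l k ↔ a ≤ k ∧ k ≤ b) := by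
  induction l with
  | nil =>
    refine ⟨0, 0, le_refl _, le_refl _, by simp, fun k => ?_⟩
    simp only [pm]
    split <;> constructor <;> intro h <;> first | omega | exact absurd h (lt_irrefl _) | norm_num
  | cons p t ih =>
    obtain ⟨a, b, ha0, hab, hbl, hiff⟩ := ih hl.cons
    obtain ⟨hp0, hp1⟩ := hl.head
    have hnn := fun k => pm_nonneg hl.cons k
    rcases eq_or_lt_of_le hp0 with hp0' | hp0'
    · -- p = 0
      refine ⟨a, b, ha0, hab, by simp; omega, fun k => ?_⟩
      simp only [pm, ← hp0']
      rw [show (1 - 0) * pm t k + 0 * pm t (k-1) = pm t k by ring]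
      exact hiff k
    rcases eq_or_lt_of_le hp1 with hp1' | hp1'
    · -- p = 1
      refine ⟨a + 1, b + 1, by omega, by omega, by simp; omega, fun k => ?_⟩
      simp only [pm, hp1']
      rw [show (1 - 1) * pm t k + 1 * pm t (k-1) = pm t (k-1) by ring]
      rw [hiff (k-1)]; omega
    · -- 0 < p < 1
      refine ⟨a, b + 1, ha0, by omega, by simp; omega, fun k => ?_⟩
      simp only [pm]
      constructor
      · intro h
        have : 0 < pm t k ∨ 0 < pm t (k - 1) := by
          by_contra hc
          push_neg at hc
          have e1 : pm t k = 0 := le_antisymm hc.1 (hnn k)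
          have e2 : pm t (k-1) = 0 := le_antisymm hc.2 (hnn (k-1))
          rw [e1, e2] at h; simp at h
        rcases this with h' | h'
        · rw [hiff k] at h'; omega
        · rw [hiff (k-1)] at h'; omega
      · intro ⟨h1, h2⟩
        rcases le_or_gt k b with h' | h'
        · have : 0 < pm t k := (hiff k).2 ⟨h1, h'⟩
          nlinarith [hnn (k-1)]
        · have : 0 < pm t (k-1) := (hiff (k-1)).2 ⟨by omega, by omega⟩
          nlinarith [hnn k]

lemma pm_pos_between {l : List ℝ} (hl : Good l) {i j k : ℤ}
    (hi : 0 < pm l i) (hj : 0 < pm l j) (h1 : i ≤ k) (h2 : k ≤ j) : 0 < pm l k := by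
  obtain ⟨a, b, _, _, _, hiff⟩ := pm_support hl
  rw [hiff] at hi hj ⊢
  omega

lemma pm_nil (k : ℤ) : pm [] k = if k = 0 then 1 else 0 := rfl

lemma pm_cons (p : ℝ) (l : List ℝ) (k : ℤ) :
    pm (p :: l) k = (1 - p) * pm l k + p * pm l (k - 1) := rfl

lemma pm_cross_of {t : List ℝ} (hG : Good t)
    (hlc : ∀ k : ℤ, pm t (k - 1) * pm t (k + 1) ≤ pm t k ^ 2) (k : ℤ) :
    pm t (k - 2) * pm t (k + 1) ≤ pm t (k - 1) * pm t k := by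
  by_cases h1 : 0 < pm t (k - 1)
  · by_cases h2 : 0 < pm t k
    · have e1 := hlc (k - 1)
      have e2 := hlc k
      rw [show k - 1 - 1 = k - 2 by ring, show k - 1 + 1 = k by ring] at e1
      nlinarith [mul_pos h1 h2, pm_nonneg hG (k - 2), pm_nonneg hG (k + 1),
        mul_nonneg (pm_nonneg hG (k - 2)) (pm_nonneg hG (k + 1))]
    · have e : pm t k = 0 := le_antisymm (not_lt.1 h2) (pm_nonneg hG k)
      rcases lt_or_ge 0 (pm t (k - 2)) with h3 | h3
      · rcases lt_or_ge 0 (pm t (k + 1)) with h4 | h4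
        · exact absurd (pm_pos_between hG h3 h4 (by omega) (by omega)) h2
        · have : pm t (k + 1) = 0 := le_antisymm h4 (pm_nonneg hG (k + 1))
          rw [this, e]; ring_nf; rfl
      · have : pm t (k - 2) = 0 := le_antisymm h3 (pm_nonneg hG (k - 2))
        rw [this, e]; ring_nf; rfl
  · have e : pm t (k - 1) = 0 := le_antisymm (not_lt.1 h1) (pm_nonneg hG (k - 1))
    rcases lt_or_ge 0 (pm t (k - 2)) with h3 | h3
    · rcases lt_or_ge 0 (pm t (k + 1)) with h4 | h4
      · exact absurd (pm_pos_between hG h3 h4 (by omega) (by omega)) h1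
      · have : pm t (k + 1) = 0 := le_antisymm h4 (pm_nonneg hG (k + 1))
        rw [this, e]; ring_nf; rfl
    · have : pm t (k - 2) = 0 := le_antisymm h3 (pm_nonneg hG (k - 2))
      rw [this, e]; ring_nf; rfl

lemma pm_lc {l : List ℝ} (hl : Good l) (k : ℤ) :
    pm l (k - 1) * pm l (k + 1) ≤ pm l k ^ 2 := by
  induction l generalizing k with
  | nil =>
    simp only [pm_nil]
    split_ifs <;> first | omega | norm_num
  | cons p t ih =>
    obtain ⟨hp0, hp1⟩ := hl.head
    have hG := hl.cons
    have e1 := ih hG k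
    have e2 := ih hG (k - 1)
    rw [show k - 1 - 1 = k - 2 by ring, show k - 1 + 1 = k by ring] at e2
    have e3 := pm_cross_of hG (ih hG) k
    simp only [pm_cons]
    rw [show k + 1 - 1 = k by ring, show k - 1 - 1 = k - 2 by ring]
    nlinarith [mul_nonneg hp0 (sub_nonneg.2 hp1), sq_nonneg p, sq_nonneg (1 - p),
      mul_nonneg (pm_nonneg hG (k-1)) (pm_nonneg hG k)]

/-- number of nondegenerate entries -/
noncomputable def nd (l : List ℝ) : ℕ := l.countP (fun x => decide (0 < x ∧ x < 1))

lemma nd_cons (p : ℝ) (l : List ℝ) :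
    nd (p :: l) = nd l + if 0 < p ∧ p < 1 then 1 else 0 := by
  simp only [nd, List.countP_cons, decide_eq_true_eq]

lemma pm_point {l : List ℝ} (hl : Good l) (hnd : nd l = 0) :
    ∃ s : ℤ, 0 ≤ s ∧ (∀ k, pm l k = if k = s then 1 else 0) ∧ (s : ℝ) = l.sum := by
  induction l with
  | nil => exact ⟨0, le_refl _, fun k => pm_nil k, by simp⟩
  | cons p t ih =>
    rw [nd_cons] at hnd
    have hpr : ¬(0 < p ∧ p < 1) := by intro h; simp [h] at hnd
    have hnd' : nd t = 0 := by by_contra h; simp at hnd; omega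
    obtain ⟨s, hs0, hs, hsum⟩ := ih hl.cons hnd'
    obtain ⟨hp0, hp1⟩ := hl.head
    have hp : p = 0 ∨ p = 1 := by
      rcases eq_or_lt_of_le hp0 with h | h
      · exact Or.inl h.symm
      · rcases eq_or_lt_of_le hp1 with h' | h'
        · exact Or.inr h'
        · exact absurd ⟨h, h'⟩ hpr
    rcases hp with rfl | rfl
    · refine ⟨s, hs0, fun k => ?_, by simp [← hsum]⟩
      rw [pm_cons, hs k, hs (k-1)]
      split_ifs <;> first | omega | norm_num
    · refine ⟨s + 1, by omega, fun k => ?_, by rw [List.sum_cons, ← hsum]; push_cast; ring⟩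
      rw [pm_cons, hs k, hs (k-1)]
      split_ifs <;> first | omega | norm_num

lemma pm_twoPoint {l : List ℝ} (hl : Good l) (hnd : nd l ≤ 1) :
    ∃ (s : ℤ) (r : ℝ), 0 ≤ s ∧ 0 ≤ r ∧ r < 1 ∧
      (∀ k, pm l k = if k = s then 1 - r else if k = s + 1 then r else 0) ∧
      ((s : ℝ) + r = l.sum) := by
  induction l with
  | nil =>
    refine ⟨0, 0, le_refl _, le_refl _, by norm_num, fun k => ?_, by simp⟩
    rw [pm_nil]
    split_ifs <;> first | omega | norm_num
  | cons p t ih =>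
    rw [nd_cons] at hnd
    obtain ⟨hp0, hp1⟩ := hl.head
    by_cases hpr : 0 < p ∧ p < 1
    · have hnd' : nd t = 0 := by simp [hpr] at hnd; omega
      obtain ⟨s, hs0, hs, hsum⟩ := pm_point hl.cons hnd'
      refine ⟨s, p, hs0, hp0, hpr.2, fun k => ?_, by rw [List.sum_cons, ← hsum]; ring⟩
      rw [pm_cons, hs k, hs (k-1)]
      split_ifs with h1 h2 h2 h3 h3 <;> first | omega | norm_num
    · have hnd' : nd t ≤ 1 := by simp [hpr] at hnd; omega
      obtain ⟨s, r, hs0, hr0, hr1, hs, hsum⟩ := ih hl.cons hnd'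
      have hp : p = 0 ∨ p = 1 := by
        rcases eq_or_lt_of_le hp0 with h | h
        · exact Or.inl h.symm
        · rcases eq_or_lt_of_le hp1 with h' | h'
          · exact Or.inr h'
          · exact absurd ⟨h, h'⟩ hpr
      rcases hp with rfl | rfl
      · refine ⟨s, r, hs0, hr0, hr1, fun k => ?_, by rw [List.sum_cons, ← hsum]; ring⟩
        rw [pm_cons, hs k, hs (k-1)]
        split_ifs <;> first | omega | norm_num
      · refine ⟨s + 1, r, by omega, hr0, hr1, fun k => ?_, by rw [List.sum_cons, ← hsum]; push_cast; ring⟩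
        rw [pm_cons, hs k, hs (k-1)]
        have : k - 1 = s ↔ k = s + 1 := by omega
        split_ifs <;> first | omega | norm_num

set_option maxHeartbeats 1000000 in
lemma pm_strict_lc {l : List ℝ} (hl : Good l) (hnd : 2 ≤ nd l) {k : ℤ}
    (h1 : 0 < pm l (k - 1)) (h2 : 0 < pm l (k + 1)) :
    pm l (k - 1) * pm l (k + 1) < pm l k ^ 2 := by
  induction l generalizing k with
  | nil => simp [nd] at hnd
  | cons p t ih =>
    obtain ⟨hp0, hp1⟩ := hl.head
    have hG := hl.cons
    rw [nd_cons] at hnd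
    by_cases hpr : 0 < p ∧ p < 1
    · obtain ⟨hp0', hp1'⟩ := hpr
      have hq' : 0 < 1 - p := by linarith
      simp only [pm_cons] at h1 h2 ⊢
      rw [show k - 1 - 1 = k - 2 by ring] at h1 ⊢
      rw [show k + 1 - 1 = k by ring] at h2 ⊢
      by_cases hA : 0 < pm t (k - 1)
      · by_cases hnd2 : 2 ≤ nd t
        · -- t has at least two nondegenerate entries
          by_cases hB : 0 < pm t (k + 1)
          · have s1 := ih hG hnd2 hA hB
            have e2 := pm_lc hG (k - 1)
            rw [show k - 1 - 1 = k - 2 by ring, show k - 1 + 1 = k by ring] at e2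
            have e3 := pm_cross_of hG (pm_lc hG) k
            have T1 : 0 < (1-p)^2 * (pm t k ^ 2 - pm t (k-1) * pm t (k+1)) :=
              mul_pos (by positivity) (sub_pos.2 s1)
            have T2 : 0 ≤ p * (1-p) * (pm t k * pm t (k-1) - pm t (k-2) * pm t (k+1)) :=
              mul_nonneg (by positivity) (by nlinarith [e3])
            have T3 : 0 ≤ p^2 * (pm t (k-1) ^ 2 - pm t (k-2) * pm t k) :=
              mul_nonneg (by positivity) (sub_nonneg.2 e2)
            nlinarith [T1, T2, T3]
          · have hB0 : pm t (k + 1) = 0 := le_antisymm (not_lt.1 hB) (pm_nonneg hG (k + 1))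
            have hk0 : 0 < pm t k := by
              rw [hB0] at h2; nlinarith
            have e1 := pm_lc hG k
            have e3 := pm_cross_of hG (pm_lc hG) k
            by_cases hC : 0 < pm t (k - 2)
            · have s2 := ih hG hnd2 (k := k - 1) (by rw [show k-1-1 = k-2 by ring]; exact hC)
                (by rw [show k-1+1 = k by ring]; exact hk0)
              rw [show k - 1 - 1 = k - 2 by ring, show k - 1 + 1 = k by ring] at s2
              have T1 : 0 ≤ (1-p)^2 * (pm t k ^ 2 - pm t (k-1) * pm t (k+1)) :=
                mul_nonneg (by positivity) (sub_nonneg.2 e1)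
              have T2 : 0 ≤ p * (1-p) * (pm t k * pm t (k-1) - pm t (k-2) * pm t (k+1)) :=
                mul_nonneg (by positivity) (by nlinarith [e3])
              have T3 : 0 < p^2 * (pm t (k-1) ^ 2 - pm t (k-2) * pm t k) :=
                mul_pos (by positivity) (sub_pos.2 s2)
              nlinarith [T1, T2, T3]
            · have hC0 : pm t (k - 2) = 0 := le_antisymm (not_lt.1 hC) (pm_nonneg hG (k - 2))
              have T1 : 0 ≤ (1-p)^2 * (pm t k ^ 2 - pm t (k-1) * pm t (k+1)) :=
                mul_nonneg (by positivity) (sub_nonneg.2 e1)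
              have T2 : 0 ≤ p * (1-p) * (pm t k * pm t (k-1) - pm t (k-2) * pm t (k+1)) :=
                mul_nonneg (by positivity) (by nlinarith [e3])
              have T3 : 0 < p^2 * (pm t (k-1) ^ 2 - pm t (k-2) * pm t k) := by
                rw [hC0]
                have : pm t (k-1) ^ 2 - 0 * pm t k = pm t (k-1)^2 := by ring
                rw [this]
                positivity
              nlinarith [T1, T2, T3]
        · -- t has exactly one nondegenerate entry : two-point support
          have hnd1 : nd t ≤ 1 := by omega
          obtain ⟨s, r, hs0, hr0, hr1, hs, hsum⟩ := pm_twoPoint hG hnd1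
          have vA : k - 1 = s ∨ k - 1 = s + 1 := by
            by_contra hc
            push_neg at hc
            rw [hs (k-1), if_neg hc.1, if_neg hc.2] at hA
            exact lt_irrefl _ hA
          have hv2 : 0 < pm t (k + 1) ∨ 0 < pm t k := by
            by_contra hc
            push_neg at hc
            have u1 : pm t (k+1) = 0 := le_antisymm hc.1 (pm_nonneg hG (k+1))
            have u2 : pm t k = 0 := le_antisymm hc.2 (pm_nonneg hG k)
            rw [u1, u2] at h2; nlinarith
          have vB : (k + 1 = s ∨ k + 1 = s + 1) ∨ (k = s ∨ k = s + 1) := by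
            rcases hv2 with hv | hv
            · left; by_contra hc; push_neg at hc
              rw [hs (k+1), if_neg hc.1, if_neg hc.2] at hv
              exact lt_irrefl _ hv
            · right; by_contra hc; push_neg at hc
              rw [hs k, if_neg hc.1, if_neg hc.2] at hv
              exact lt_irrefl _ hv
          have hk : k = s + 1 := by omega
          subst hk
          have hrpos : 0 < r := by
            rcases lt_or_ge 0 r with h | h
            · exact h
            · have : r = 0 := le_antisymm h hr0
              subst this
              rw [hs (s+1+1), if_neg (by omega), if_neg (by omega),
                  hs (s+1), if_neg (by omega), if_pos rfl] at h2
              nlinarith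
          have v0 : pm t (s - 1) = 0 := by
            rw [hs (s-1), if_neg (by omega), if_neg (by omega)]
          have v1 : pm t s = 1 - r := by rw [hs s, if_pos rfl]
          have v2 : pm t (s + 1) = r := by
            rw [hs (s+1), if_neg (by omega), if_pos rfl]
          have v3 : pm t (s + 2) = 0 := by
            rw [hs (s+2), if_neg (by omega), if_neg (by omega)]
          have w1 : pm t (s + 1 - 1) = 1 - r := by rw [show s + 1 - 1 = s by ring, v1]
          have w2 : pm t (s + 1 - 2) = 0 := by rw [show s + 1 - 2 = s - 1 by ring, v0]
          have w3 : pm t (s + 1 + 1) = 0 := by rw [show s + 1 + 1 = s + 2 by ring, v3]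
          rw [w1, w2, w3, v2]
          nlinarith [sq_nonneg ((1-p)*r), sq_nonneg (p*(1-r)),
            mul_pos (mul_pos hp0' hq') (mul_pos hrpos (sub_pos.2 hr1))]
      · -- pm t (k-1) = 0 : contradiction via interval support
        have hA0 : pm t (k - 1) = 0 := le_antisymm (not_lt.1 hA) (pm_nonneg hG (k - 1))
        have hC : 0 < pm t (k - 2) := by
          rw [hA0] at h1; nlinarith
        have hv2 : 0 < pm t (k + 1) ∨ 0 < pm t k := by
          by_contra hc
          push_neg at hc
          have u1 : pm t (k+1) = 0 := le_antisymm hc.1 (pm_nonneg hG (k+1))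
          have u2 : pm t k = 0 := le_antisymm hc.2 (pm_nonneg hG k)
          rw [u1, u2] at h2; nlinarith
        rcases hv2 with hv | hv
        · exact absurd (pm_pos_between hG hC hv (by omega) (by omega)) hA
        · exact absurd (pm_pos_between hG hC hv (by omega) (by omega)) hA
    · -- p degenerate
      have hnd' : 2 ≤ nd t := by simp [hpr] at hnd; omega
      have hp : p = 0 ∨ p = 1 := by
        rcases eq_or_lt_of_le hp0 with h | h
        · exact Or.inl h.symm
        · rcases eq_or_lt_of_le hp1 with h' | h'
          · exact Or.inr h'
          · exact absurd ⟨h, h'⟩ hpr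
      rcases hp with rfl | rfl
      · simp only [pm_cons] at h1 h2 ⊢
        simp only [sub_zero, one_mul, zero_mul, add_zero] at h1 h2 ⊢
        exact ih hG hnd' h1 h2
      · simp only [pm_cons] at h1 h2 ⊢
        simp only [sub_self, zero_mul, one_mul, zero_add] at h1 h2 ⊢
        rw [show k + 1 - 1 = k - 1 + 1 by ring] at h2 ⊢
        exact ih hG hnd' h1 h2

lemma Good.eraseIdx {l : List ℝ} (hl : Good l) (j : ℕ) : Good (l.eraseIdx j) :=
  fun q hq => hl q (List.mem_of_mem_eraseIdx hq)

lemma list_sum_eq_fin (l : List ℝ) : l.sum = ∑ j : Fin l.length, l.get j := by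
  induction l with
  | nil => simp
  | cons p t ih =>
    have e : ∑ j : Fin (p :: t).length, (p :: t).get j
        = (p :: t).get ⟨0, by simp⟩ + ∑ j : Fin t.length, (p :: t).get j.succ :=
      Fin.sum_univ_succ _
    rw [List.sum_cons, ih, e]; rfl

lemma pm_eraseIdx {l : List ℝ} : ∀ (j : Fin l.length) (k : ℤ),
    pm l k = (1 - l.get j) * pm (l.eraseIdx j) k + l.get j * pm (l.eraseIdx j) (k - 1) := by
  induction l with
  | nil => exact fun j => absurd j.2 (by simp)
  | cons p t ih =>
    intro j k
    rcases Fin.eq_zero_or_eq_succ j with rfl | ⟨i, rfl⟩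
    · simp only [List.get_cons_zero, Fin.val_zero, List.eraseIdx_cons_zero]
      exact pm_cons p t k
    · simp only [List.get_cons_succ', Fin.val_succ, List.eraseIdx_cons_succ]
      rw [pm_cons, pm_cons, pm_cons, ih i k, ih i (k - 1)]
      ring

lemma pm_deriv {l : List ℝ} : ∀ k : ℤ,
    ((k : ℝ) + 1) * pm l (k + 1) = ∑ j : Fin l.length, l.get j * pm (l.eraseIdx j) k := by
  induction l with
  | nil =>
    intro k
    rw [show (Finset.univ : Finset (Fin ([] : List ℝ).length)) = ∅ by simp, Finset.sum_empty]
    rcases eq_or_ne k (-1) with rfl | hk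
    · norm_num
    · rw [pm_nil, if_neg (by omega)]; ring
  | cons p t ih =>
    intro k
    have e0 : ∑ j : Fin (p :: t).length, (p :: t).get j * pm ((p :: t).eraseIdx ↑j) k
        = (p :: t).get ⟨0, by simp⟩ * pm ((p :: t).eraseIdx ((⟨0, by simp⟩ : Fin (p::t).length) : ℕ)) k
          + ∑ j : Fin t.length, (p :: t).get j.succ * pm ((p :: t).eraseIdx ↑(j.succ)) k :=
      Fin.sum_univ_succ _
    have hhead : (p :: t).get ⟨0, by simp⟩
        * pm ((p :: t).eraseIdx ((⟨0, by simp⟩ : Fin (p::t).length) : ℕ)) k = p * pm t k := rfl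
    rw [e0, hhead]
    simp only [List.get_cons_succ', Fin.val_succ, List.eraseIdx_cons_succ]
    have expand : ∀ j : Fin t.length, t.get j * pm (p :: t.eraseIdx j) k
        = (1 - p) * (t.get j * pm (t.eraseIdx j) k) + p * (t.get j * pm (t.eraseIdx j) (k - 1)) := by
      intro j; rw [pm_cons]; ring
    rw [Finset.sum_congr rfl (fun j _ => expand j), Finset.sum_add_distrib,
      ← Finset.mul_sum, ← Finset.mul_sum, ← ih k, ← ih (k - 1), pm_cons]
    rw [show k + 1 - 1 = k by ring, show k - 1 + 1 = k by ring]
    push_cast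
    ring

lemma pm_identity {l : List ℝ} (m : ℤ) :
    ((m : ℝ) + 1 - l.sum) * pm l (m + 1)
      = ∑ j : Fin l.length, (l.get j * (1 - l.get j)) *
          (pm (l.eraseIdx j) m - pm (l.eraseIdx j) (m + 1)) := by
  have h1 := pm_deriv (l := l) m
  have e : ((m : ℝ) + 1 - l.sum) * pm l (m + 1)
      = ((m : ℝ) + 1) * pm l (m + 1) - ∑ j : Fin l.length, l.get j * pm l (m + 1) := by
    rw [← Finset.sum_mul, ← list_sum_eq_fin]; ring
  rw [e, h1, ← Finset.sum_sub_distrib]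
  refine Finset.sum_congr rfl fun j _ => ?_
  rw [pm_eraseIdx j (m + 1), show m + 1 - 1 = m by ring]
  ring

lemma pm_term_nonneg {l : List ℝ} (hl : Good l) {m : ℤ}
    (hmode : pm l (m + 1) ≤ pm l m) (j : Fin l.length) :
    0 ≤ (l.get j * (1 - l.get j)) * (pm (l.eraseIdx j) m - pm (l.eraseIdx j) (m + 1)) := by
  obtain ⟨hg0, hg1⟩ := hl (l.get j) (by simpa using List.get_mem l j.1 j.2)
  set g := l.get j with hg
  set c := pm (l.eraseIdx (j : ℕ)) with hc
  have hGe : Good (l.eraseIdx (j : ℕ)) := hl.eraseIdx j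
  rcases eq_or_lt_of_le hg0 with h | h0
  · rw [← h]; ring_nf; rfl
  rcases eq_or_lt_of_le hg1 with h | h1
  · rw [h]; ring_nf; rfl
  have hfac : 0 < g * (1 - g) := mul_pos h0 (by linarith)
  rcases le_or_gt (c (m + 1)) (c m) with hle | hgt
  · exact mul_nonneg hfac.le (by linarith)
  · exfalso
    have i1 := pm_eraseIdx j m
    have i2 := pm_eraseIdx j (m + 1)
    rw [show m + 1 - 1 = m by ring] at i2
    rw [i1, i2, ← hg, ← hc] at hmode
    have hcm1 : c m < c (m - 1) := by nlinarith
    have hlc := pm_lc hGe m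
    have hnnm := pm_nonneg hGe m
    have hsum2 : 0 ≤ c (m - 1) + c (m + 1) - 2 * c m := by linarith
    nlinarith [mul_pos (sub_pos.2 hcm1) (sub_pos.2 hgt), mul_nonneg hnnm hsum2]

lemma ratio_step_aux {l : List ℝ} (hl : Good l) (k : ℤ) : ∀ d : ℕ,
    (∀ s : ℤ, k ≤ s → s ≤ k + (d : ℤ) + 1 → 0 < pm l s) →
    pm l k * pm l (k + (d : ℤ) + 1) ≤ pm l (k + 1) * pm l (k + (d : ℤ)) := by
  intro d
  induction d with
  | zero => intro _; push_cast; rw [add_zero, mul_comm]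
  | succ n ih =>
    intro hpos
    set nn : ℤ := k + (n : ℤ) with hnn
    have hcast : k + ((n : ℕ) + 1 : ℕ) = nn + 1 := by push_cast; ring
    rw [hcast, show nn + 1 + 1 = nn + 2 by ring]
    have ih' := ih (fun s h1 h2 => hpos s h1 (by push_cast at h2 ⊢; omega))
    rw [show k + (n : ℤ) + 1 = nn + 1 by rw [hnn]] at ih'
    have hlc := pm_lc hl (nn + 1)
    rw [show nn + 1 - 1 = nn by ring, show nn + 1 + 1 = nn + 2 by ring] at hlc
    have h1 : pm l k * pm l (nn + 1) * pm l (nn + 2) ≤ pm l (k + 1) * pm l nn * pm l (nn + 2) :=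
      mul_le_mul_of_nonneg_right ih' (pm_nonneg hl (nn + 2))
    have h2 : pm l (k + 1) * (pm l nn * pm l (nn + 2)) ≤ pm l (k + 1) * pm l (nn + 1) ^ 2 :=
      mul_le_mul_of_nonneg_left hlc (pm_nonneg hl (k + 1))
    have hp : 0 < pm l (nn + 1) := hpos (nn + 1) (by omega) (by push_cast; omega)
    have hkey : pm l k * pm l (nn + 2) * pm l (nn + 1)
        ≤ pm l (k + 1) * pm l (nn + 1) * pm l (nn + 1) := by nlinarith
    exact le_of_mul_le_mul_right hkey hp

lemma ratio_step {l : List ℝ} (hl : Good l) {k t : ℤ} (hkt : k ≤ t)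
    (hpos : ∀ s : ℤ, k ≤ s → s ≤ t + 1 → 0 < pm l s) :
    pm l k * pm l (t + 1) ≤ pm l (k + 1) * pm l t := by
  have hd : t = k + ((t - k).toNat : ℤ) := by omega
  rw [hd] at hpos ⊢
  exact ratio_step_aux hl k (t - k).toNat hpos

lemma good_reflect {l : List ℝ} (hl : Good l) : Good (l.map (fun p => 1 - p)) := by
  intro q hq
  rw [List.mem_map] at hq
  obtain ⟨x, hx, rfl⟩ := hq
  obtain ⟨a, b⟩ := hl x hx
  constructor <;> linarith

lemma sum_reflect (l : List ℝ) : (l.map (fun p => 1 - p)).sum = (l.length : ℝ) - l.sum := by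
  induction l with
  | nil => simp
  | cons p t ih => simp only [List.map_cons, List.sum_cons, ih, List.length_cons]; push_cast; ring

lemma nd_reflect (l : List ℝ) (hl : Good l) : nd (l.map (fun p => 1 - p)) = nd l := by
  induction l with
  | nil => simp [nd]
  | cons p t ih =>
    obtain ⟨h0, h1⟩ := hl.head
    simp only [List.map_cons, nd, List.countP_cons, decide_eq_true_eq] at ih ⊢
    rw [ih hl.cons]
    congr 1
    by_cases h : 0 < p ∧ p < 1
    · rw [if_pos h, if_pos ⟨by linarith [h.2], by linarith [h.1]⟩]
    · rw [if_neg h, if_neg ?_]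
      intro hc
      exact h ⟨by linarith [hc.2], by linarith [hc.1]⟩

lemma pm_reflect (l : List ℝ) (k : ℤ) :
    pm (l.map (fun p => 1 - p)) k = pm l ((l.length : ℤ) - k) := by
  induction l generalizing k with
  | nil => simp only [List.map_nil, pm_nil, List.length_nil]; split_ifs <;> first | rfl | omega
  | cons p t ih =>
    simp only [List.map_cons, List.length_cons]
    rw [pm_cons, pm_cons, ih k, ih (k - 1)]
    push_cast
    rw [show (t.length : ℤ) - (k - 1) = (t.length : ℤ) + 1 - k by ring,
      show (t.length : ℤ) + 1 - k - 1 = (t.length : ℤ) - k by ring]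
    ring

/-- a mode is positive -/
lemma mode_pos {l : List ℝ} (hl : Good l) {m : ℤ} (hm : ∀ k, pm l k ≤ pm l m) :
    0 < pm l m := by
  by_contra hc
  push_neg at hc
  have hz : ∀ k ∈ Icc (0 : ℤ) (l.length : ℤ), pm l k = 0 := fun k _ =>
    le_antisymm (le_trans (hm k) hc) (pm_nonneg hl k)
  have := pm_sum (l := l) (a := 0) (b := (l.length : ℤ)) (le_refl 0) (le_refl _)
  rw [Finset.sum_congr rfl hz, Finset.sum_const, smul_zero] at this
  norm_num at this

lemma mode_range {l : List ℝ} (hl : Good l) {m : ℤ} (hm : ∀ k, pm l k ≤ pm l m) :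
    0 ≤ m ∧ m ≤ (l.length : ℤ) := by
  have hp := mode_pos hl hm
  constructor
  · by_contra hc; rw [pm_zero_of_neg (by omega)] at hp; exact lt_irrefl _ hp
  · by_contra hc; rw [pm_zero_of_gt (by omega)] at hp; exact lt_irrefl _ hp

/-- Key right-hand bound: the mean is strictly less than any mode plus one. -/
theorem core_right {l : List ℝ} (hl : Good l) {m : ℤ} (hm : ∀ k, pm l k ≤ pm l m) :
    l.sum < (m : ℝ) + 1 := by
  have hMpos := mode_pos hl hm
  obtain ⟨hm0, hmn⟩ := mode_range hl hm
  by_cases hnd : 2 ≤ nd l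
  · -- at least two nondegenerate entries
    rcases le_or_gt (pm l (m + 1)) 0 with h0 | h0
    · -- pm l (m+1) = 0 : mass is supported on (-∞, m], so mean ≤ m
      have hz : pm l (m + 1) = 0 := le_antisymm h0 (pm_nonneg hl (m + 1))
      have hbound : ∀ k ∈ Icc (0 : ℤ) (l.length : ℤ), (k : ℝ) * pm l k ≤ (m : ℝ) * pm l k := by
        intro k _
        rcases le_or_gt (pm l k) 0 with hk | hk
        · have : pm l k = 0 := le_antisymm hk (pm_nonneg hl k)
          rw [this]; ring_nf; rfl
        · have hkm : k ≤ m := by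
            by_contra hc
            push_neg at hc
            have := pm_pos_between hl (k := m + 1) hMpos hk (by omega) (by omega)
            rw [hz] at this; exact lt_irrefl _ this
          have : (k : ℝ) ≤ (m : ℝ) := by exact_mod_cast hkm
          exact mul_le_mul_of_nonneg_right this (pm_nonneg hl k)
      have := Finset.sum_le_sum hbound
      rw [pm_mean (le_refl 0) (le_refl _), ← Finset.mul_sum,
        pm_sum (le_refl 0) (le_refl _), mul_one] at this
      linarith
    · -- pm l (m+1) > 0 : use the identity
      by_contra hc
      push_neg at hc
      have hle : (m : ℝ) + 1 - l.sum ≤ 0 := by linarith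
      have hid := pm_identity (l := l) m
      have hterms := fun j => pm_term_nonneg hl (hm (m + 1)) j
      have hsum_nonneg : (0:ℝ) ≤ ∑ j : Fin l.length, (l.get j * (1 - l.get j)) *
          (pm (l.eraseIdx j) m - pm (l.eraseIdx j) (m + 1)) :=
        Finset.sum_nonneg fun j _ => hterms j
      have hprod : ((m : ℝ) + 1 - l.sum) * pm l (m + 1) ≤ 0 :=
        mul_nonpos_of_nonpos_of_nonneg hle (pm_nonneg hl (m + 1))
      have hzero : ((m : ℝ) + 1 - l.sum) * pm l (m + 1) = 0 := le_antisymm hprod (hid ▸ hsum_nonneg)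
      have hmu : l.sum = (m : ℝ) + 1 := by
        rcases mul_eq_zero.1 hzero with h | h
        · linarith
        · rw [h] at h0; exact absurd h0 (lt_irrefl 0)
      -- all terms vanish
      have hallzero : ∀ j : Fin l.length, (l.get j * (1 - l.get j)) *
          (pm (l.eraseIdx j) m - pm (l.eraseIdx j) (m + 1)) = 0 := by
        have := hid.symm.trans hzero
        intro j
        exact (Finset.sum_eq_zero_iff_of_nonneg (fun j _ => hterms j)).1 this j (mem_univ j)
      -- pick a nondegenerate index
      have hex : ∃ x ∈ l, 0 < x ∧ x < 1 := by
        have : 0 < l.countP (fun x => decide (0 < x ∧ x < 1)) := by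
          unfold nd at hnd; omega
        obtain ⟨x, hxl, hx⟩ := List.countP_pos_iff.1 this
        exact ⟨x, hxl, by simpa using hx⟩
      obtain ⟨x, hxl, hx0, hx1⟩ := hex
      obtain ⟨n, hn, hget⟩ := List.mem_iff_getElem.1 hxl
      set j : Fin l.length := ⟨n, hn⟩ with hj
      have hgetj : l.get j = x := hget
      set c := pm (l.eraseIdx (j : ℕ)) with hcdef
      have hGe : Good (l.eraseIdx (j : ℕ)) := hl.eraseIdx (j : ℕ)
      have hfac : 0 < x * (1 - x) := mul_pos hx0 (by linarith)
      have hceq : c m = c (m + 1) := by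
        have := hallzero j
        rw [hgetj, ← hcdef] at this
        rcases mul_eq_zero.1 this with h | h
        · exact absurd h (ne_of_gt hfac)
        · linarith [sub_eq_zero.1 h]
      -- pm l (m+1) = c (m+1) = c m > 0
      have hi2 := pm_eraseIdx (l := l) j (m + 1)
      rw [hgetj, ← hcdef, show m + 1 - 1 = m by ring] at hi2
      have hcm1pos : 0 < c (m + 1) := by nlinarith [hceq, hi2, h0]
      have hcmpos : 0 < c m := hceq ▸ hcm1pos
      -- pm l m ≥ pm l (m+1) forces c (m-1) ≥ c m, then log-concavity gives equality
      have hi1 := pm_eraseIdx (l := l) j m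
      rw [hgetj, ← hcdef] at hi1
      have hmode1 := hm (m + 1)
      have hcm_left : c m ≤ c (m - 1) := by nlinarith [hceq, hi1, hi2, hmode1]
      have hlcc := pm_lc hGe m
      rw [← hcdef] at hlcc
      have hcmeq : c (m - 1) = c m := by nlinarith [hceq]
      -- three consecutive equal positive values of c : contradiction
      by_cases hnd2 : 2 ≤ nd (l.eraseIdx (j : ℕ))
      · have := pm_strict_lc hGe hnd2 (k := m) (by rw [← hcdef]; rw [hcmeq]; exact hcmpos)
          (by rw [← hcdef]; exact hcm1pos)
        rw [← hcdef] at this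
        nlinarith [hceq, hcmeq]
      · obtain ⟨s, r, _, hr0, hr1, hs, _⟩ := pm_twoPoint hGe (by omega)
        have v1 : c (m - 1) ≠ 0 := by rw [hcmeq]; exact ne_of_gt hcmpos
        have v2 : c m ≠ 0 := ne_of_gt hcmpos
        have v3 : c (m + 1) ≠ 0 := ne_of_gt hcm1pos
        rw [hcdef] at v1 v2 v3
        rw [hs (m - 1)] at v1
        rw [hs m] at v2
        rw [hs (m + 1)] at v3
        by_cases e1 : m - 1 = s
        · by_cases e2 : m + 1 = s + 1
          · omega
          · rw [if_neg (by omega), if_neg e2] at v3; exact v3 rfl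
        · by_cases e2 : m - 1 = s + 1
          · rw [if_neg (by omega), if_neg (by omega)] at v3; exact v3 rfl
          · rw [if_neg e1, if_neg e2] at v1; exact v1 rfl
  · -- at most one nondegenerate entry : two-point distribution
    obtain ⟨s, r, hs0, hr0, hr1, hs, hsum⟩ := pm_twoPoint hl (by omega)
    have hms : m = s ∨ m = s + 1 := by
      by_contra hc
      push_neg at hc
      rw [hs m, if_neg hc.1, if_neg hc.2] at hMpos
      exact lt_irrefl _ hMpos
    rcases hms with rfl | rfl
    · rw [← hsum]; linarith
    · rw [← hsum]; push_cast; linarith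

theorem core_left {l : List ℝ} (hl : Good l) {m : ℤ} (hm : ∀ k, pm l k ≤ pm l m) :
    (m : ℝ) - l.sum < 1 := by
  set L := l.map (fun p => 1 - p) with hL
  have hlen : L.length = l.length := by rw [hL, List.length_map]
  have hmode : ∀ k, pm L k ≤ pm L ((l.length : ℤ) - m) := by
    intro k
    rw [pm_reflect, pm_reflect, show (l.length : ℤ) - ((l.length : ℤ) - m) = m by ring]
    exact hm _
  have hmode' : ∀ k, pm L k ≤ pm L ((L.length : ℤ) - m) := by
    intro k
    rw [show (L.length : ℤ) = (l.length : ℤ) by rw [hlen]]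
    exact hmode k
  have := core_right (good_reflect hl) (m := (L.length : ℤ) - m) hmode'
  rw [hL, sum_reflect] at this
  rw [hlen] at this
  push_cast at this ⊢
  linarith

theorem core_adjacent {l : List ℝ} (hl : Good l) {m₁ m₂ : ℤ}
    (hm1 : ∀ k, pm l k ≤ pm l m₁) (hm2 : ∀ k, pm l k ≤ pm l m₂)
    (horder : m₁ + 2 ≤ m₂) : False := by
  have heq : pm l m₁ = pm l m₂ := le_antisymm (hm2 m₁) (hm1 m₂)
  have hp1 : 0 < pm l m₁ := mode_pos hl hm1
  have hp2 : 0 < pm l m₂ := mode_pos hl hm2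
  have hposin : ∀ s : ℤ, m₁ ≤ s → s ≤ m₂ → 0 < pm l s := fun s h1 h2 =>
    pm_pos_between hl hp1 hp2 h1 h2
  by_cases hnd : 2 ≤ nd l
  · -- step 1 : pm l (m₁ + 1) = pm l m₁
    have hrs1 := ratio_step hl (k := m₁) (t := m₂ - 1) (by omega)
      (fun s h1 h2 => hposin s h1 (by omega))
    rw [show m₂ - 1 + 1 = m₂ by ring] at hrs1
    have h1le : pm l m₁ ≤ pm l (m₁ + 1) := by
      nlinarith [hm1 (m₂ - 1), pm_nonneg hl (m₁ + 1), hposin (m₂ - 1) (by omega) (by omega)]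
    have heq1 : pm l (m₁ + 1) = pm l m₁ := le_antisymm (hm1 (m₁ + 1)) h1le
    -- step 2 : strict log-concavity at m₁ + 1
    have hstrict := pm_strict_lc hl hnd (k := m₁ + 1)
      (by rw [show m₁ + 1 - 1 = m₁ by ring]; exact hp1)
      (by rw [show m₁ + 1 + 1 = m₁ + 2 by ring]; exact hposin (m₁ + 2) (by omega) (by omega))
    rw [show m₁ + 1 - 1 = m₁ by ring, show m₁ + 1 + 1 = m₁ + 2 by ring, heq1] at hstrict
    have hlt : pm l (m₁ + 2) < pm l m₁ := by nlinarith
    -- step 3 : ratio step from m₁ + 1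
    have hrs2 := ratio_step hl (k := m₁ + 1) (t := m₂ - 1) (by omega)
      (fun s h1 h2 => hposin s (by omega) (by omega))
    rw [show m₂ - 1 + 1 = m₂ by ring, show m₁ + 1 + 1 = m₁ + 2 by ring] at hrs2
    nlinarith [hm1 (m₂ - 1), pm_nonneg hl (m₁ + 2),
      hposin (m₂ - 1) (by omega) (by omega)]
  · obtain ⟨s, r, _, hr0, hr1, hs, _⟩ := pm_twoPoint hl (by omega)
    have e1 : m₁ = s ∨ m₁ = s + 1 := by
      by_contra hc; push_neg at hc
      rw [hs m₁, if_neg hc.1, if_neg hc.2] at hp1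
      exact lt_irrefl _ hp1
    have e2 : m₂ = s ∨ m₂ = s + 1 := by
      by_contra hc; push_neg at hc
      rw [hs m₂, if_neg hc.1, if_neg hc.2] at hp2
      exact lt_irrefl _ hp2
    omega

lemma pm_ofFn : ∀ (n : ℕ) (p : Fin n → ℝ) (k : ℤ),
    pm (List.ofFn p) k = ∑ x : Fin n → Bool,
      (if (∑ j, (if x j then (1:ℤ) else 0)) = k
        then ∏ j, (if x j then p j else 1 - p j) else 0) := by
  intro n
  induction n with
  | zero =>
    intro p k
    rw [List.ofFn_zero, pm_nil, Fintype.sum_unique]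
    simp only [Finset.univ_eq_empty, Finset.sum_empty, Finset.prod_empty]
    by_cases h : k = 0
    · rw [if_pos h, if_pos (by omega)]
    · rw [if_neg h, if_neg (by omega)]
  | succ n ih =>
    intro p k
    rw [List.ofFn_succ, pm_cons, ih _ k, ih _ (k - 1)]
    rw [← Equiv.sum_comp (Fin.consEquiv (fun _ => Bool))
      (fun x : Fin (n+1) → Bool => (if (∑ j, (if x j then (1:ℤ) else 0)) = k
        then ∏ j, (if x j then p j else 1 - p j) else 0)), Fintype.sum_prod_type]
    rw [Fintype.sum_bool]
    have hcons : ∀ (b : Bool) (y : Fin n → Bool),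
        (Fin.consEquiv (fun _ => Bool)) (b, y) = Fin.cons (α := fun _ => Bool) b y := fun _ _ => rfl
    have hsum : ∀ (b : Bool) (y : Fin n → Bool),
        (∑ j : Fin (n+1), (if Fin.cons (α := fun _ => Bool) b y j then (1:ℤ) else 0))
          = (if b then (1:ℤ) else 0) + ∑ j : Fin n, (if y j then (1:ℤ) else 0) := by
      intro b y
      rw [Fin.sum_univ_succ]
      simp only [Fin.cons_zero, Fin.cons_succ]
    have hprod : ∀ (b : Bool) (y : Fin n → Bool),
        (∏ j : Fin (n+1), (if Fin.cons (α := fun _ => Bool) b y j then p j else 1 - p j))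
          = (if b then p 0 else 1 - p 0) * ∏ j : Fin n, (if y j then p j.succ else 1 - p j.succ) := by
      intro b y
      rw [Fin.prod_univ_succ]
      simp only [Fin.cons_zero, Fin.cons_succ]
    have htrue : ∀ y : Fin n → Bool,
        (if (∑ j, (if Fin.cons (α := fun _ => Bool) true y j then (1:ℤ) else 0)) = k
          then ∏ j, (if Fin.cons (α := fun _ => Bool) true y j then p j else 1 - p j) else 0)
        = p 0 * (if (∑ j, (if y j then (1:ℤ) else 0)) = k - 1
            then ∏ j : Fin n, (if y j then p j.succ else 1 - p j.succ) else 0) := by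
      intro y
      rw [hsum, hprod,
        show (if (true = true) then (1:ℤ) else 0) = 1 from rfl,
        show (if (true = true) then p 0 else 1 - p 0) = p 0 from rfl]
      by_cases h : (∑ j : Fin n, (if y j then (1:ℤ) else 0)) = k - 1
      · rw [if_pos (by omega), if_pos h]
      · rw [if_neg (by omega), if_neg h, mul_zero]
    have hfalse : ∀ y : Fin n → Bool,
        (if (∑ j, (if Fin.cons (α := fun _ => Bool) false y j then (1:ℤ) else 0)) = k
          then ∏ j, (if Fin.cons (α := fun _ => Bool) false y j then p j else 1 - p j) else 0)
        = (1 - p 0) * (if (∑ j, (if y j then (1:ℤ) else 0)) = k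
            then ∏ j : Fin n, (if y j then p j.succ else 1 - p j.succ) else 0) := by
      intro y
      rw [hsum, hprod,
        show (if (false = true) then (1:ℤ) else 0) = 0 from rfl,
        show (if (false = true) then p 0 else 1 - p 0) = 1 - p 0 from rfl]
      by_cases h : (∑ j : Fin n, (if y j then (1:ℤ) else 0)) = k
      · rw [if_pos (by omega), if_pos h]
      · rw [if_neg (by omega), if_neg h, mul_zero]
    simp only [Fin.consEquiv_apply]
    rw [Finset.sum_congr rfl (fun y _ => htrue y), Finset.sum_congr rfl (fun y _ => hfalse y),
      ← Finset.mul_sum, ← Finset.mul_sum]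
    ring
section Prob

variable {Ω : Type*} [MeasureSpace Ω] [IsProbabilityMeasure (ℙ : Measure Ω)]
    {n : ℕ} (B : Fin n → Ω → ℝ) (p : Fin n → ℝ)

lemma preimage_one_eq (j : Fin n) : {ω | B j ω = 1} = B j ⁻¹' {1} := by
  ext ω; simp

lemma preimage_zero_eq (j : Fin n) : {ω | B j ω = 0} = B j ⁻¹' {0} := by
  ext ω; simp

lemma measP1 (h1 : ∀ j, (ℙ {ω | B j ω = 1}).toReal = p j) (j : Fin n) :
    ℙ (B j ⁻¹' {(1:ℝ)}) = ENNReal.ofReal (p j) := by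
  rw [← preimage_one_eq, ← h1 j, ENNReal.ofReal_toReal (measure_ne_top _ _)]

lemma measP0 (h0 : ∀ j, (ℙ {ω | B j ω = 0}).toReal = 1 - p j) (j : Fin n) :
    ℙ (B j ⁻¹' {(0:ℝ)}) = ENNReal.ofReal (1 - p j) := by
  rw [← preimage_zero_eq, ← h0 j, ENNReal.ofReal_toReal (measure_ne_top _ _)]

lemma measN (hmeas : ∀ j, Measurable (B j))
    (hp0 : ∀ j, 0 ≤ p j) (hp1 : ∀ j, p j ≤ 1)
    (h1 : ∀ j, (ℙ {ω | B j ω = 1}).toReal = p j)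
    (h0 : ∀ j, (ℙ {ω | B j ω = 0}).toReal = 1 - p j) (j : Fin n) :
    ℙ ((B j ⁻¹' ({0, 1} : Set ℝ))ᶜ) = 0 := by
  have hms : MeasurableSet ({(0:ℝ), 1} : Set ℝ) :=
    (measurableSet_singleton (1:ℝ)).insert 0
  rw [prob_compl_eq_zero_iff (hmeas j hms)]
  have hsplit : B j ⁻¹' ({0, 1} : Set ℝ) = B j ⁻¹' {0} ∪ B j ⁻¹' {1} := by
    rw [← Set.preimage_union, Set.singleton_union]
  have hdisj : Disjoint (B j ⁻¹' {(0:ℝ)}) (B j ⁻¹' {(1:ℝ)}) := by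
    rw [Set.disjoint_left]
    intro ω hω0 hω1
    simp only [Set.mem_preimage, Set.mem_singleton_iff] at hω0 hω1
    rw [hω0] at hω1
    norm_num at hω1
  rw [hsplit, measure_union hdisj (hmeas j (measurableSet_singleton 1)),
    measP0 B p h0 j, measP1 B p h1 j,
    ← ENNReal.ofReal_add (by linarith [hp1 j]) (hp0 j)]
  norm_num

lemma meas_eq (hmeas : ∀ j, Measurable (B j))
    (hindep : iIndepFun B ℙ)
    (hp0 : ∀ j, 0 ≤ p j) (hp1 : ∀ j, p j ≤ 1)
    (h1 : ∀ j, (ℙ {ω | B j ω = 1}).toReal = p j)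
    (h0 : ∀ j, (ℙ {ω | B j ω = 0}).toReal = 1 - p j) (k : ℤ) :
    ℙ {ω | (∑ j, B j ω) = (k : ℝ)} = ENNReal.ofReal (pm (List.ofFn p) k) := by
  classical
  set E : (Fin n → Bool) → Set Ω :=
    fun x => ⋂ j, B j ⁻¹' {if x j then (1:ℝ) else 0} with hE
  have hEmeas : ∀ x, MeasurableSet (E x) := fun x =>
    MeasurableSet.iInter fun j => hmeas j (measurableSet_singleton _)
  have hPE : ∀ x : Fin n → Bool,
      ℙ (E x) = ENNReal.ofReal (∏ j, if x j then p j else 1 - p j) := by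
    intro x
    have hint : E x = ⋂ j ∈ Finset.univ, B j ⁻¹' {if x j then (1:ℝ) else 0} := by
      rw [hE]; simp
    rw [hint, hindep.measure_inter_preimage_eq_mul Finset.univ
      (fun i _ => measurableSet_singleton _)]
    rw [ENNReal.ofReal_prod_of_nonneg (fun j _ => by
      by_cases h : x j
      · rw [if_pos h]; exact hp0 j
      · rw [if_neg h]; linarith [hp1 j])]
    refine Finset.prod_congr rfl fun j _ => ?_
    by_cases h : x j
    · rw [if_pos h, if_pos h, measP1 B p h1 j]
    · rw [if_neg h, if_neg h, measP0 B p h0 j]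
  set T : Finset (Fin n → Bool) :=
    Finset.univ.filter (fun x => (∑ j, (if x j then (1:ℤ) else 0)) = k) with hT
  set N : Set Ω := ⋃ j, (B j ⁻¹' ({0, 1} : Set ℝ))ᶜ with hNdef
  have hN : ℙ N = 0 :=
    measure_iUnion_null fun j => measN B p hmeas hp0 hp1 h1 h0 j
  set A : Set Ω := {ω | (∑ j, B j ω) = (k : ℝ)} with hA
  have hcast : ∀ x : Fin n → Bool,
      ((∑ j, (if x j then (1:ℤ) else 0) : ℤ) : ℝ) = ∑ j, (if x j then (1:ℝ) else 0) := by
    intro x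
    rw [Int.cast_sum]
    exact Finset.sum_congr rfl fun j _ => by split_ifs <;> norm_num
  have hUsub : (⋃ x ∈ T, E x) ⊆ A := by
    intro ω hω
    rw [Set.mem_iUnion₂] at hω
    obtain ⟨x, hxT, hωx⟩ := hω
    rw [hE] at hωx
    rw [Set.mem_iInter] at hωx
    have hBval : ∀ j, B j ω = (if x j then (1:ℝ) else 0) := by
      intro j
      have := hωx j
      rwa [Set.mem_preimage, Set.mem_singleton_iff] at this
    rw [hT, Finset.mem_filter] at hxT
    rw [hA, Set.mem_setOf_eq, Finset.sum_congr rfl (fun j _ => hBval j), ← hcast x, hxT.2]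
  have hAsub : A ⊆ (⋃ x ∈ T, E x) ∪ N := by
    intro ω hω
    by_cases hωN : ω ∈ N
    · exact Or.inr hωN
    · left
      rw [hNdef] at hωN
      simp only [Set.mem_iUnion, Set.mem_compl_iff, not_exists, not_not] at hωN
      have hval : ∀ j, B j ω = 0 ∨ B j ω = 1 := by
        intro j
        have := hωN j
        rw [Set.mem_preimage] at this
        simpa using this
      set x : Fin n → Bool := fun j => if B j ω = 1 then true else false with hx
      have hBval : ∀ j, B j ω = (if x j then (1:ℝ) else 0) := by
        intro j
        rcases hval j with h | h
        · rw [hx]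
          simp only [h]
          norm_num
        · rw [hx]
          simp only [h]
          norm_num
      have hsum : (∑ j, B j ω) = ((∑ j, (if x j then (1:ℤ) else 0) : ℤ) : ℝ) := by
        rw [hcast x]
        exact Finset.sum_congr rfl fun j _ => hBval j
      rw [hA, Set.mem_setOf_eq] at hω
      have hxT : x ∈ T := by
        rw [hT, Finset.mem_filter]
        refine ⟨Finset.mem_univ x, ?_⟩
        have : ((∑ j, (if x j then (1:ℤ) else 0) : ℤ) : ℝ) = (k : ℝ) := by
          rw [← hsum, hω]
        exact_mod_cast this
      rw [Set.mem_iUnion₂]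
      refine ⟨x, hxT, ?_⟩
      rw [hE, Set.mem_iInter]
      intro j
      rw [Set.mem_preimage, Set.mem_singleton_iff]
      exact hBval j
  have hdisjT : (T : Set (Fin n → Bool)).PairwiseDisjoint E := by
    intro x _ y _ hxy
    rw [Function.onFun, Set.disjoint_left]
    intro ω hωx hωy
    have hj : ∃ j, x j ≠ y j := by
      by_contra hc
      push_neg at hc
      exact hxy (funext hc)
    obtain ⟨j, hj⟩ := hj
    rw [hE, Set.mem_iInter] at hωx hωy
    have e1 := hωx j
    have e2 := hωy j
    rw [Set.mem_preimage, Set.mem_singleton_iff] at e1 e2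
    rcases Bool.eq_false_or_eq_true (x j) with hxj | hxj <;>
      rcases Bool.eq_false_or_eq_true (y j) with hyj | hyj <;>
        rw [hxj] at e1 hj <;> rw [hyj] at e2 hj <;>
          first
            | exact hj rfl
            | (rw [e1] at e2; norm_num at e2)
  have hPU : ℙ (⋃ x ∈ T, E x) = ∑ x ∈ T, ℙ (E x) :=
    measure_biUnion_finset hdisjT (fun x _ => hEmeas x)
  have hPA : ℙ A = ℙ (⋃ x ∈ T, E x) := by
    refine le_antisymm ?_ (measure_mono hUsub)
    calc ℙ A ≤ ℙ ((⋃ x ∈ T, E x) ∪ N) := measure_mono hAsub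
    _ ≤ ℙ (⋃ x ∈ T, E x) + ℙ N := measure_union_le _ _
    _ = ℙ (⋃ x ∈ T, E x) := by rw [hN, add_zero]
  rw [hPA, hPU, Finset.sum_congr rfl (fun x _ => hPE x),
    ← ENNReal.ofReal_sum_of_nonneg (fun x _ => Finset.prod_nonneg (fun j _ => by
      by_cases h : x j
      · rw [if_pos h]; exact hp0 j
      · rw [if_neg h]; linarith [hp1 j]))]
  rw [pm_ofFn n p k, ← Finset.sum_filter]

lemma mean_eq (hmeas : ∀ j, Measurable (B j))
    (hp0 : ∀ j, 0 ≤ p j) (hp1 : ∀ j, p j ≤ 1)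
    (h1 : ∀ j, (ℙ {ω | B j ω = 1}).toReal = p j)
    (h0 : ∀ j, (ℙ {ω | B j ω = 0}).toReal = 1 - p j) :
    ∫ ω, ∑ j, B j ω ∂ℙ = ∑ j, p j := by
  have hae : ∀ j, B j =ᵐ[ℙ]
      (fun ω => Set.indicator (B j ⁻¹' {(1:ℝ)}) (fun _ => (1:ℝ)) ω) := by
    intro j
    have hnull := measN B p hmeas hp0 hp1 h1 h0 j
    have hmem : ∀ᵐ ω ∂ℙ, ω ∈ B j ⁻¹' ({0, 1} : Set ℝ) :=
      MeasureTheory.mem_ae_iff.2 hnull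
    filter_upwards [hmem] with ω hω
    rw [Set.mem_preimage] at hω
    have hval : B j ω = 0 ∨ B j ω = 1 := by simpa using hω
    rcases hval with h | h
    · rw [Set.indicator_of_notMem, h]
      rw [Set.mem_preimage, Set.mem_singleton_iff, h]
      norm_num
    · rw [Set.indicator_of_mem, h]
      rw [Set.mem_preimage, Set.mem_singleton_iff]
      exact h
  have hint : ∀ j, Integrable (B j) ℙ := fun j =>
    ((integrable_const (1:ℝ)).indicator (hmeas j (measurableSet_singleton 1))).congr
      (hae j).symm
  rw [integral_finset_sum _ (fun j _ => hint j)]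
  refine Finset.sum_congr rfl fun j _ => ?_
  rw [integral_congr_ae (hae j),
    integral_indicator_const (1:ℝ) (hmeas j (measurableSet_singleton 1)),
    ← preimage_one_eq, measureReal_def, h1 j, smul_eq_mul, mul_one]

end Prob
end DarrochAux

end

open DarrochAux

/-- Darroch: a sum `B` of independent Bernoulli random variables has a
mode, any two modes are adjacent, and any mode `m_B` satisfies `|m_B - μ_B| < 1`. -/
theorem darroch_mode_mean
    {Ω : Type*} [MeasureSpace Ω] [IsProbabilityMeasure (ℙ : Measure Ω)]
    {m : ℕ} (B : Fin m → Ω → ℝ) (p : Fin m → ℝ)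
    (hmeas : ∀ j, Measurable (B j))
    (hindep : iIndepFun B ℙ)
    (hp0 : ∀ j, 0 ≤ p j) (hp1 : ∀ j, p j ≤ 1)
    (h1 : ∀ j, (ℙ {ω | B j ω = 1}).toReal = p j)
    (h0 : ∀ j, (ℙ {ω | B j ω = 0}).toReal = 1 - p j)
    (μB : ℝ) (hμB : μB = ∫ ω, ∑ j, B j ω ∂ℙ) :
    (∃ mB : ℤ, ∀ k : ℤ,
        ℙ {ω | (∑ j, B j ω) = (k : ℝ)} ≤ ℙ {ω | (∑ j, B j ω) = (mB : ℝ)}) ∧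
    (∀ m₁ m₂ : ℤ,
        (∀ k : ℤ, ℙ {ω | (∑ j, B j ω) = (k : ℝ)} ≤ ℙ {ω | (∑ j, B j ω) = (m₁ : ℝ)}) →
        (∀ k : ℤ, ℙ {ω | (∑ j, B j ω) = (k : ℝ)} ≤ ℙ {ω | (∑ j, B j ω) = (m₂ : ℝ)}) →
        |m₁ - m₂| ≤ 1) ∧
    (∀ mB : ℤ,
        (∀ k : ℤ, ℙ {ω | (∑ j, B j ω) = (k : ℝ)} ≤ ℙ {ω | (∑ j, B j ω) = (mB : ℝ)}) →
        |(mB : ℝ) - μB| < 1) := by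
  have hMeq := meas_eq B p hmeas hindep hp0 hp1 h1 h0
  set l : List ℝ := List.ofFn p with hldef
  have hGood : DarrochAux.Good l := by
    intro q hq
    rw [hldef, List.mem_ofFn] at hq
    obtain ⟨j, rfl⟩ := hq
    exact ⟨hp0 j, hp1 j⟩
  have hμ : μB = l.sum := by
    rw [hμB, mean_eq B p hmeas hp0 hp1 h1 h0, hldef, Fin.sum_ofFn]
  -- translate ℙ-modes into pm-modes
  have mode_iff : ∀ mB : ℤ,
      (∀ k : ℤ, ℙ {ω | (∑ j, B j ω) = (k : ℝ)} ≤ ℙ {ω | (∑ j, B j ω) = (mB : ℝ)}) ↔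
      (∀ k : ℤ, pm l k ≤ pm l mB) := by
    intro mB
    constructor
    · intro h k
      have := h k
      rw [hMeq k, hMeq mB] at this
      exact (ENNReal.ofReal_le_ofReal_iff (pm_nonneg hGood mB)).1 this
    · intro h k
      rw [hMeq k, hMeq mB]
      exact ENNReal.ofReal_le_ofReal (h k)
  refine ⟨?_, ?_, ?_⟩
  · -- existence of a mode
    have hne : (Icc (0:ℤ) (l.length : ℤ)).Nonempty := ⟨0, by simp⟩
    obtain ⟨mB, hmBmem, hmax⟩ := Finset.exists_max_image (Icc (0:ℤ) (l.length : ℤ))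
      (fun k => pm l k) hne
    refine ⟨mB, fun k => ?_⟩
    rw [hMeq k, hMeq mB]
    apply ENNReal.ofReal_le_ofReal
    by_cases hk : k ∈ Icc (0:ℤ) (l.length : ℤ)
    · exact hmax k hk
    · rw [Finset.mem_Icc] at hk
      push_neg at hk
      have hzero : pm l k = 0 := by
        rcases lt_or_ge k 0 with h | h
        · exact pm_zero_of_neg h
        · exact pm_zero_of_gt (hk h)
      rw [hzero]
      calc (0:ℝ) ≤ pm l 0 := pm_nonneg hGood 0
      _ ≤ pm l mB := hmax 0 (by simp)
  · -- modes are adjacent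
    intro m₁ m₂ hh1 hh2
    have hf1 := (mode_iff m₁).1 hh1
    have hf2 := (mode_iff m₂).1 hh2
    rw [abs_le]
    constructor
    · by_contra hc
      push_neg at hc
      exact core_adjacent hGood hf1 hf2 (by omega)
    · by_contra hc
      push_neg at hc
      exact core_adjacent hGood hf2 hf1 (by omega)
  · -- mode is within 1 of the mean
    intro mB hh
    have hf := (mode_iff mB).1 hh
    have hr := core_right hGood hf
    have hlft := core_left hGood hf
    rw [abs_lt, hμ]
    constructor <;> linarith
end

section
/- Suppose P(X ∈ ℤ) = 0 or P(X ∈ ℤ + 1/2) = 0. Then T_i ∈ {0, 1} for every i = 1,…,n, and if k is the number of indices i with T_i = 0, then for every real t, P(X = (n − k)/2 + t) = P(∑_{i : T_i = 0} X_i = t); that is, the distribution of X is the Poisson binomial distribution of the k trials with T_i = 0 (with success probabilities W_i) shifted to the right by (n − k)/2. -/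
open MeasureTheory ProbabilityTheory Finset
open scoped Classical

namespace PTAux

def HI : Set ℝ := {x | ∃ m : ℤ, x = (m : ℝ)}
def HH : Set ℝ := {x | ∃ m : ℤ, x = (m : ℝ) + 1/2}
def HD : Set ℝ := {x | ∃ m : ℤ, x = (m : ℝ) / 2}

lemma HI_meas : MeasurableSet HI := by
  have : HI = Set.range (fun m : ℤ => (m : ℝ)) := by
    ext x; simp [HI, Set.range, eq_comm]
  rw [this]; exact (Set.countable_range _).measurableSet

lemma HH_meas : MeasurableSet HH := by
  have : HH = Set.range (fun m : ℤ => (m : ℝ) + 1/2) := by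
    ext x; simp [HH, Set.range, eq_comm]
  rw [this]; exact (Set.countable_range _).measurableSet

lemma HD_eq : HD = HI ∪ HH := by
  ext x
  constructor
  · rintro ⟨m, rfl⟩
    rcases Int.even_or_odd m with ⟨q, hq⟩ | ⟨q, hq⟩
    · exact Or.inl ⟨q, by subst hq; push_cast; ring⟩
    · exact Or.inr ⟨q, by subst hq; push_cast; ring⟩
  · rintro (⟨m, rfl⟩ | ⟨m, rfl⟩)
    · exact ⟨2*m, by push_cast; ring⟩
    · exact ⟨2*m+1, by push_cast; ring⟩

lemma HD_add {x y : ℝ} (hx : x ∈ HD) (hy : y ∈ HD) : x + y ∈ HD := by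
  obtain ⟨a, rfl⟩ := hx; obtain ⟨b, rfl⟩ := hy
  exact ⟨a + b, by push_cast; ring⟩

lemma HI_add_HI {x y : ℝ} (hx : x ∈ HI) (hy : y ∈ HI) : x + y ∈ HI := by
  obtain ⟨a, rfl⟩ := hx; obtain ⟨b, rfl⟩ := hy
  exact ⟨a + b, by push_cast; ring⟩

lemma HI_add_HH {x y : ℝ} (hx : x ∈ HI) (hy : y ∈ HH) : x + y ∈ HH := by
  obtain ⟨a, rfl⟩ := hx; obtain ⟨b, rfl⟩ := hy
  exact ⟨a + b, by push_cast; ring⟩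

lemma half_add_HI {y : ℝ} (hy : y ∈ HI) : (1/2 : ℝ) + y ∈ HH := by
  obtain ⟨b, rfl⟩ := hy
  exact ⟨b, by ring⟩

lemma half_add_HH {y : ℝ} (hy : y ∈ HH) : (1/2 : ℝ) + y ∈ HI := by
  obtain ⟨b, rfl⟩ := hy
  exact ⟨b + 1, by push_cast; ring⟩

end PTAux

open PTAux

/-- degenerate case: if `P(X ∈ ℤ) = 0` or `P(X ∈ ℤ + 1/2) = 0`, then
every `T_i ∈ {0, 1}`, and with `k` the number of indices with `T_i = 0`, the
distribution of `X` is the Poisson binomial distribution of those `k` trials shifted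
to the right by `(n - k)/2`. -/
theorem poisson_trinomial_degenerate
    {Ω : Type*} [MeasureSpace Ω] [IsProbabilityMeasure (ℙ : Measure Ω)]
    {n : ℕ} (X : Fin n → Ω → ℝ) (T W : Fin n → ℝ)
    (hmeas : ∀ i, Measurable (X i))
    (hindep : iIndepFun X ℙ)
    (hT0 : ∀ i, 0 ≤ T i) (hW0 : ∀ i, 0 ≤ W i) (hTW1 : ∀ i, T i + W i ≤ 1)
    (hT : ∀ i, (ℙ {ω | X i ω = 1/2}).toReal = T i)
    (hW : ∀ i, (ℙ {ω | X i ω = 1}).toReal = W i)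
    (hL : ∀ i, (ℙ {ω | X i ω = 0}).toReal = 1 - T i - W i)
    (hdeg : ℙ {ω | ∃ m : ℤ, (∑ i, X i ω) = (m : ℝ)} = 0 ∨
            ℙ {ω | ∃ m : ℤ, (∑ i, X i ω) = (m : ℝ) + 1/2} = 0) :
    (∀ i, T i = 0 ∨ T i = 1) ∧
    (∀ t : ℝ,
      ℙ {ω | (∑ i, X i ω) =
          ((n : ℝ) - (univ.filter (fun i => T i = 0)).card) / 2 + t} =
      ℙ {ω | (∑ i ∈ univ.filter (fun i => T i = 0), X i ω) = t}) := by
  have hfin : ∀ (s : Set Ω), ℙ s ≠ ⊤ := fun s => measure_ne_top _ _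
  have hm0 : ∀ i, MeasurableSet {ω | X i ω = 0} :=
    fun i => (hmeas i) (measurableSet_singleton 0)
  have hm2 : ∀ i, MeasurableSet {ω | X i ω = 1/2} :=
    fun i => (hmeas i) (measurableSet_singleton _)
  have hm1 : ∀ i, MeasurableSet {ω | X i ω = 1} :=
    fun i => (hmeas i) (measurableSet_singleton 1)
  -- each X i is a.e. valued in {0, 1/2, 1}
  have hval : ∀ i, ∀ᵐ ω ∂(ℙ : Measure Ω),
      X i ω = 0 ∨ X i ω = 1/2 ∨ X i ω = 1 := by
    intro i
    have hd1 : Disjoint {ω | X i ω = 0} ({ω | X i ω = 1/2} ∪ {ω | X i ω = 1}) := by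
      rw [Set.disjoint_left]; rintro ω (h0 : X i ω = 0) (h2 | h2) <;>
        · simp only [Set.mem_setOf_eq] at h2; rw [h0] at h2; norm_num at h2
    have hd2 : Disjoint {ω | X i ω = 1/2} {ω | X i ω = 1} := by
      rw [Set.disjoint_left]; rintro ω (h0 : X i ω = 1/2) (h2 : X i ω = 1)
      rw [h0] at h2; norm_num at h2
    have hU : ℙ ({ω | X i ω = 0} ∪ ({ω | X i ω = 1/2} ∪ {ω | X i ω = 1})) = 1 := by
      rw [measure_union hd1 ((hm2 i).union (hm1 i)), measure_union hd2 (hm1 i)]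
      have h1 : (ℙ ({ω | X i ω = 0}) + (ℙ {ω | X i ω = 1/2} + ℙ {ω | X i ω = 1})).toReal
          = 1 := by
        rw [ENNReal.toReal_add (hfin _) (ENNReal.add_ne_top.2 ⟨hfin _, hfin _⟩),
          ENNReal.toReal_add (hfin _) (hfin _), hL, hT, hW]
        ring
      have h2 := ENNReal.add_ne_top.2 ⟨hfin {ω | X i ω = 0},
        ENNReal.add_ne_top.2 ⟨hfin {ω | X i ω = 1/2}, hfin {ω | X i ω = 1}⟩⟩
      rw [← ENNReal.ofReal_toReal h2, h1]; norm_num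
    have hUeq : {ω | X i ω = 0 ∨ X i ω = 1/2 ∨ X i ω = 1}
        = {ω | X i ω = 0} ∪ ({ω | X i ω = 1/2} ∪ {ω | X i ω = 1}) := by
      ext ω; simp [Set.mem_union]
    rw [show (∀ᵐ ω ∂(ℙ : Measure Ω), X i ω = 0 ∨ X i ω = 1/2 ∨ X i ω = 1)
        ↔ {ω | X i ω = 0 ∨ X i ω = 1/2 ∨ X i ω = 1} ∈ ae (ℙ : Measure Ω) from Iff.rfl,
      mem_ae_iff_prob_eq_one (by rw [hUeq]; exact ((hm0 i).union ((hm2 i).union (hm1 i)))),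
      hUeq]
    exact hU
  -- Part 1
  have part1 : ∀ i, T i = 0 ∨ T i = 1 := by
    intro i
    by_contra hcon
    push_neg at hcon
    obtain ⟨hT0i, hT1i⟩ := hcon
    set S' : Ω → ℝ := fun ω => ∑ j ∈ univ.erase i, X j ω with hS'
    have hS'meas : Measurable S' :=
      Finset.measurable_sum _ (fun j _ => hmeas j)
    have hS'apply : ∀ ω, S' ω = ∑ j ∈ univ.erase i, X j ω := fun ω => rfl
    have hfuneq : (∑ j ∈ univ.erase i, X j) = S' := by
      ext ω; rw [Finset.sum_apply]
    have hind : IndepFun S' (X i) ℙ := by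
      rw [← hfuneq]
      exact hindep.indepFun_finsetSum_of_notMem hmeas (Finset.notMem_erase i univ)
    -- a.e. S' ∈ HI ∪ HH
    have hS'val : ∀ᵐ ω ∂(ℙ : Measure Ω), S' ω ∈ HI ∪ HH := by
      have hall : ∀ᵐ ω ∂(ℙ : Measure Ω), ∀ j, X j ω = 0 ∨ X j ω = 1/2 ∨ X j ω = 1 :=
        (MeasureTheory.ae_all_iff).2 hval
      filter_upwards [hall] with ω hω
      rw [← HD_eq, hS'apply]
      refine Finset.sum_induction _ (· ∈ HD) (fun a b ha hb => HD_add ha hb) ⟨0, by simp⟩ ?_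
      intro j _
      rcases hω j with h | h | h
      · exact ⟨0, by simp [h]⟩
      · exact ⟨1, by simp [h]⟩
      · exact ⟨2, by norm_num [h]⟩
    have hS'1 : ℙ (S' ⁻¹' (HI ∪ HH)) = 1 := by
      rw [← mem_ae_iff_prob_eq_one (hS'meas (HI_meas.union HH_meas))]
      exact hS'val
    -- the four product events
    have hprod : ∀ (s t : Set ℝ), MeasurableSet s → MeasurableSet t →
        ℙ (S' ⁻¹' s ∩ X i ⁻¹' t) = ℙ (S' ⁻¹' s) * ℙ (X i ⁻¹' t) :=
      fun s t hs ht => hind.measure_inter_preimage_eq_mul s t hs ht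
    -- P(X i = 1/2) ≠ 0 and P(X i ∈ {0,1}) ≠ 0
    have hA : ℙ (X i ⁻¹' {(1:ℝ)/2}) ≠ 0 := by
      intro h
      have : (ℙ {ω | X i ω = 1/2}).toReal = 0 := by
        rw [show {ω | X i ω = 1/2} = X i ⁻¹' {(1:ℝ)/2} from rfl, h]; simp
      exact hT0i (by rw [← hT i, this])
    have hBsplit : ℙ (X i ⁻¹' {(0:ℝ), 1}) = ℙ {ω | X i ω = 0} + ℙ {ω | X i ω = 1} := by
      have : X i ⁻¹' {(0:ℝ), 1} = {ω | X i ω = 0} ∪ {ω | X i ω = 1} := by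
        ext ω; simp [Set.mem_preimage]
      rw [this, measure_union ?_ (hm1 i)]
      rw [Set.disjoint_left]; rintro ω (h0 : X i ω = 0) (h1 : X i ω = 1)
      rw [h0] at h1; norm_num at h1
    have hB : ℙ (X i ⁻¹' {(0:ℝ), 1}) ≠ 0 := by
      intro h
      have : (ℙ {ω | X i ω = 0}).toReal + (ℙ {ω | X i ω = 1}).toReal = 0 := by
        rw [← ENNReal.toReal_add (hfin _) (hfin _), ← hBsplit, h]; simp
      rw [hL, hW] at this
      exact hT1i (by linarith)
    -- inclusions of product events into the degenerate events
    have hsub1 : S' ⁻¹' HI ∩ X i ⁻¹' {(0:ℝ), 1}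
        ⊆ {ω | ∃ m : ℤ, (∑ j, X j ω) = (m : ℝ)} := by
      rintro ω ⟨hs, hx⟩
      have hsum : (∑ j, X j ω) = X i ω + S' ω := by
        rw [hS'apply, Finset.add_sum_erase univ (fun j => X j ω) (mem_univ i)]
      simp only [Set.mem_preimage, Set.mem_insert_iff, Set.mem_singleton_iff] at hx
      have : X i ω + S' ω ∈ HI := by
        rcases hx with hx | hx
        · exact HI_add_HI ⟨0, by simpa using hx⟩ hs
        · exact HI_add_HI ⟨1, by simpa using hx⟩ hs
      rw [Set.mem_setOf_eq, hsum]; exact this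
    have hsub2 : S' ⁻¹' HH ∩ X i ⁻¹' {(1:ℝ)/2}
        ⊆ {ω | ∃ m : ℤ, (∑ j, X j ω) = (m : ℝ)} := by
      rintro ω ⟨hs, hx⟩
      simp only [Set.mem_preimage, Set.mem_singleton_iff] at hx
      have hsum : (∑ j, X j ω) = X i ω + S' ω := by
        rw [hS'apply, Finset.add_sum_erase univ (fun j => X j ω) (mem_univ i)]
      rw [Set.mem_setOf_eq, hsum, hx]
      exact half_add_HH hs
    have hsub3 : S' ⁻¹' HI ∩ X i ⁻¹' {(1:ℝ)/2}
        ⊆ {ω | ∃ m : ℤ, (∑ j, X j ω) = (m : ℝ) + 1/2} := by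
      rintro ω ⟨hs, hx⟩
      simp only [Set.mem_preimage, Set.mem_singleton_iff] at hx
      have hsum : (∑ j, X j ω) = X i ω + S' ω := by
        rw [hS'apply, Finset.add_sum_erase univ (fun j => X j ω) (mem_univ i)]
      rw [Set.mem_setOf_eq, hsum, hx]
      exact half_add_HI hs
    have hsub4 : S' ⁻¹' HH ∩ X i ⁻¹' {(0:ℝ), 1}
        ⊆ {ω | ∃ m : ℤ, (∑ j, X j ω) = (m : ℝ) + 1/2} := by
      rintro ω ⟨hs, hx⟩
      have hsum : (∑ j, X j ω) = X i ω + S' ω := by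
        rw [hS'apply, Finset.add_sum_erase univ (fun j => X j ω) (mem_univ i)]
      simp only [Set.mem_preimage, Set.mem_insert_iff, Set.mem_singleton_iff] at hx
      have : X i ω + S' ω ∈ HH := by
        rcases hx with hx | hx
        · exact HI_add_HH ⟨0, by simpa using hx⟩ hs
        · exact HI_add_HH ⟨1, by simpa using hx⟩ hs
      rw [Set.mem_setOf_eq, hsum]; exact this
    -- in both cases, P(S' ∈ HI) = 0 and P(S' ∈ HH) = 0
    have hmA : MeasurableSet ({(1:ℝ)/2} : Set ℝ) := measurableSet_singleton _
    have hmB : MeasurableSet ({(0:ℝ), 1} : Set ℝ) :=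
      (measurableSet_singleton _).union (measurableSet_singleton _)
    have hCD : ℙ (S' ⁻¹' HI) = 0 ∧ ℙ (S' ⁻¹' HH) = 0 := by
      rcases hdeg with hdeg | hdeg
      · constructor
        · have h0 : ℙ (S' ⁻¹' HI ∩ X i ⁻¹' {(0:ℝ), 1}) = 0 :=
            le_antisymm (hdeg ▸ measure_mono hsub1) zero_le
          rw [hprod _ _ HI_meas hmB] at h0
          exact (mul_eq_zero.1 h0).resolve_right hB
        · have h0 : ℙ (S' ⁻¹' HH ∩ X i ⁻¹' {(1:ℝ)/2}) = 0 :=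
            le_antisymm (hdeg ▸ measure_mono hsub2) zero_le
          rw [hprod _ _ HH_meas hmA] at h0
          exact (mul_eq_zero.1 h0).resolve_right hA
      · constructor
        · have h0 : ℙ (S' ⁻¹' HI ∩ X i ⁻¹' {(1:ℝ)/2}) = 0 :=
            le_antisymm (hdeg ▸ measure_mono hsub3) zero_le
          rw [hprod _ _ HI_meas hmA] at h0
          exact (mul_eq_zero.1 h0).resolve_right hA
        · have h0 : ℙ (S' ⁻¹' HH ∩ X i ⁻¹' {(0:ℝ), 1}) = 0 :=
            le_antisymm (hdeg ▸ measure_mono hsub4) zero_le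
          rw [hprod _ _ HH_meas hmB] at h0
          exact (mul_eq_zero.1 h0).resolve_right hB
    have : ℙ (S' ⁻¹' (HI ∪ HH)) = 0 := by
      rw [Set.preimage_union]
      exact le_antisymm (le_trans (measure_union_le _ _) (by rw [hCD.1, hCD.2]; simp))
        zero_le
    rw [hS'1] at this
    exact one_ne_zero this
  refine ⟨part1, ?_⟩
  -- Part 2
  intro t
  set k := (univ.filter (fun i => T i = 0)).card with hk
  -- for i not in the filter, X i = 1/2 a.s.
  have hhalf : ∀ i ∈ univ.filter (fun i => ¬ T i = 0),
      ∀ᵐ ω ∂(ℙ : Measure Ω), X i ω = 1/2 := by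
    intro i hi
    simp only [mem_filter, mem_univ, true_and] at hi
    have hTi : T i = 1 := (part1 i).resolve_left hi
    have h1 : ℙ {ω | X i ω = 1/2} = 1 := by
      have := hT i
      rw [hTi] at this
      rw [← ENNReal.ofReal_toReal (hfin {ω | X i ω = 1/2}), this]; norm_num
    rw [show (∀ᵐ ω ∂(ℙ : Measure Ω), X i ω = 1/2)
        ↔ {ω | X i ω = 1/2} ∈ ae (ℙ : Measure Ω) from Iff.rfl,
      mem_ae_iff_prob_eq_one (hm2 i)]
    exact h1
  have hae : ∀ᵐ ω ∂(ℙ : Measure Ω),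
      (∑ i, X i ω) = ((n : ℝ) - k) / 2 + ∑ i ∈ univ.filter (fun i => T i = 0), X i ω := by
    have hall : ∀ᵐ ω ∂(ℙ : Measure Ω),
        ∀ i ∈ univ.filter (fun i => ¬ T i = 0), X i ω = 1/2 :=
      (MeasureTheory.ae_ball_iff (Set.to_countable _)).2 hhalf
    filter_upwards [hall] with ω hω
    have hsplit : (∑ i, X i ω)
        = (∑ i ∈ univ.filter (fun i => T i = 0), X i ω)
          + ∑ i ∈ univ.filter (fun i => ¬ T i = 0), X i ω := by
      rw [Finset.sum_filter_add_sum_filter_not]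
    have hconst : (∑ i ∈ univ.filter (fun i => ¬ T i = 0), X i ω)
        = ((univ.filter (fun i => ¬ T i = 0)).card : ℝ) * (1/2) := by
      rw [Finset.sum_congr rfl hω]
      simp [mul_comm]
    have hcard : ((univ.filter (fun i => ¬ T i = 0)).card : ℝ) = (n : ℝ) - k := by
      have := Finset.card_filter_add_card_filter_not
        (s := (univ : Finset (Fin n))) (p := fun i => T i = 0)
      have hn : k + (univ.filter (fun i => ¬ T i = 0)).card = n := by
        rw [hk]; simpa using this
      have : ((k : ℝ)) + ((univ.filter (fun i => ¬ T i = 0)).card : ℝ) = (n : ℝ) := by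
        exact_mod_cast congrArg (fun m : ℕ => (m : ℝ)) hn
      linarith
    rw [hsplit, hconst, hcard]; ring
  -- conclude by a.e. equality of the two events
  apply measure_congr
  filter_upwards [hae] with ω hω
  show ((∑ i, X i ω) = ((n : ℝ) - k) / 2 + t)
      = ((∑ i ∈ univ.filter (fun i => T i = 0), X i ω) = t)
  rw [eq_iff_iff]
  constructor
  · intro h; rw [hω] at h; linarith
  · intro h; rw [hω, h]
end
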